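/- For a probability vector w on Fin M with positive entries, the two scores are consistent at their extremes: D(w) = M (maximal effective sample size) if and only if K(w) = 0 (minimal approximate KL), where D(w) = (∑ w_i²)⁻¹ and K(w) = −(1/M)∑ log(M w_i). Both conditions are equivalent to w being uniform. -/

import Mathlib

theorem ess_max_iff_kl_min (M : ℕ) (hM : 1 ≤ M) (w : Fin M → ℝ)
    (hpos : ∀ i, 0 < w i) (hsum : ∑ i, w i = 1) :
    ((∑ i, (w i) ^ 2)⁻¹ = (M : ℝ) ↔ -(1 / M : ℝ) * ∑ i, Real.log ((M : ℝ) * w i) = 0) ∧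
    ((∑ i, (w i) ^ 2)⁻¹ = (M : ℝ) ↔ ∀ i, w i = 1 / M) ∧
    (-(1 / M : ℝ) * ∑ i, Real.log ((M : ℝ) * w i) = 0 ↔ ∀ i, w i = 1 / M) := by
  have hM0 : (0 : ℝ) < M := by exact_mod_cast hM
  have hMne : (M : ℝ) ≠ 0 := ne_of_gt hM0
  -- ESS condition ↔ uniform
  have hESS : (∑ i, (w i) ^ 2)⁻¹ = (M : ℝ) ↔ ∀ i, w i = 1 / M := by
    constructor
    · intro h
      have hsumsq : ∑ i, (w i) ^ 2 = (M : ℝ)⁻¹ := by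
        rw [inv_eq_iff_eq_inv] at h
        exact h
      have key : ∑ i, (w i - 1 / M) ^ 2 = 0 := by
        have expand : ∑ i, (w i - 1 / M) ^ 2
            = (∑ i, (w i) ^ 2) - (2 / M) * (∑ i, w i) + M * (1 / M) ^ 2 := by
          rw [Finset.mul_sum, ← Finset.sum_sub_distrib]
          have : (M : ℝ) * (1 / M) ^ 2 = ∑ _i : Fin M, ((1 : ℝ) / M) ^ 2 := by
            rw [Finset.sum_const, Finset.card_univ, Fintype.card_fin, nsmul_eq_mul]
          rw [this, ← Finset.sum_add_distrib]
          exact Finset.sum_congr rfl (fun i _ => by ring)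
        rw [expand, hsumsq, hsum]
        field_simp
        ring
      intro i
      have := (Finset.sum_eq_zero_iff_of_nonneg (fun i _ => sq_nonneg (w i - 1 / M))).mp key i (Finset.mem_univ i)
      have : w i - 1 / M = 0 := by
        exact pow_eq_zero_iff (by norm_num) |>.mp this
      linarith
    · intro h
      have : ∑ i, (w i) ^ 2 = (M : ℝ)⁻¹ := by
        simp only [h]
        rw [Finset.sum_const, Finset.card_univ, Fintype.card_fin]
        field_simp
        ring_nf
        rw [← mul_pow, mul_inv_cancel₀ hMne, one_pow]
      rw [this, inv_inv]
  -- KL condition ↔ uniform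
  have hKL : -(1 / M : ℝ) * ∑ i, Real.log ((M : ℝ) * w i) = 0 ↔ ∀ i, w i = 1 / M := by
    constructor
    · intro h
      have hlog0 : ∑ i, Real.log ((M : ℝ) * w i) = 0 := by
        have h1 : (1 / M : ℝ) ≠ 0 := by positivity
        rcases mul_eq_zero.mp h with h' | h'
        · exact absurd h' (by simpa using h1)
        · exact h'
      have key : ∑ i, ((M : ℝ) * w i - 1 - Real.log ((M : ℝ) * w i)) = 0 := by
        rw [Finset.sum_sub_distrib, hlog0, Finset.sum_sub_distrib, ← Finset.mul_sum, hsum]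
        simp
      intro i
      have hterm := (Finset.sum_eq_zero_iff_of_nonneg (fun j _ => by
        have := Real.add_one_le_exp (Real.log ((M : ℝ) * w j))
        have hlog := Real.log_le_sub_one_of_pos (mul_pos hM0 (hpos j))
        linarith)).mp key i (Finset.mem_univ i)
      by_contra hne
      have hx : (M : ℝ) * w i ≠ 1 := by
        intro hc
        apply hne
        field_simp
        linarith [hc]
      have := Real.log_lt_sub_one_of_pos (mul_pos hM0 (hpos i)) hx
      linarith
    · intro h
      have : ∀ i : Fin M, Real.log ((M : ℝ) * w i) = 0 := by
        intro i; rw [h i]; field_simp; exact Real.log_one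
      simp [this]
  exact ⟨hESS.trans hKL.symm, hESS, hKL⟩
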